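/- Let R be a real n×n matrix such that Σ_i r_{i,σ(i)} = 0 for every permutation σ ∈ S_n, with n ≥ 2. Then R can be written as r_{i,j} = u_i + v_j with Σ_i u_i + Σ_j v_j = 0; in particular R has rank at most 2 and trace 0. -/
import Mathlib


theorem preserver_exponent_structure {n : ℕ} (hn : 2 ≤ n)
    (R : Matrix (Fin n) (Fin n) ℝ)
    (h : ∀ σ : Equiv.Perm (Fin n), ∑ i, R i (σ i) = 0) :
    (∃ u v : Fin n → ℝ, (∀ i j, R i j = u i + v j) ∧ (∑ i, u i) + (∑ j, v j) = 0)
      ∧ R.rank ≤ 2 ∧ Matrix.trace R = 0 := by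
  have hnpos : 0 < n := by omega
  set z : Fin n := ⟨0, hnpos⟩ with hz
  -- For any permutation, the sum of (R x (σ x) - R x x) is zero
  have haux : ∀ σ : Equiv.Perm (Fin n), ∑ x, (R x (σ x) - R x x) = 0 := by
    intro σ
    rw [Finset.sum_sub_distrib, h σ]
    have := h 1
    simp only [Equiv.Perm.one_apply] at this
    rw [this]; ring
  -- swap lemma
  have hswap : ∀ a b : Fin n, a ≠ b →
      (R a b - R a a) + (R b a - R b b) = 0 := by
    intro a b hab
    have key : ∑ x ∈ ({a, b} : Finset (Fin n)), (R x (Equiv.swap a b x) - R x x) = 0 := by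
      rw [Finset.sum_subset (Finset.subset_univ _)]
      · exact haux _
      · intro x _ hx
        simp only [Finset.mem_insert, Finset.mem_singleton, not_or] at hx
        rw [Equiv.swap_apply_of_ne_of_ne hx.1 hx.2, sub_self]
    rw [Finset.sum_pair hab, Equiv.swap_apply_left, Equiv.swap_apply_right] at key
    exact key
  -- cycle lemma for three distinct elements
  have hcyc : ∀ i j : Fin n, i ≠ z → j ≠ z → i ≠ j →
      (R z j - R z z) + (R i z - R i i) + (R j i - R j j) = 0 := by
    intro i j hiz hjz hij
    set σ : Equiv.Perm (Fin n) := Equiv.swap z i * Equiv.swap z j with hσ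
    have hσz : σ z = j := by
      simp [hσ, Equiv.Perm.mul_apply, Equiv.swap_apply_left,
        Equiv.swap_apply_of_ne_of_ne hjz hij.symm]
    have hσi : σ i = z := by
      simp [hσ, Equiv.Perm.mul_apply,
        Equiv.swap_apply_of_ne_of_ne hiz hij, Equiv.swap_apply_right]
    have hσj : σ j = i := by
      simp [hσ, Equiv.Perm.mul_apply, Equiv.swap_apply_right, Equiv.swap_apply_left]
    have key : ∑ x ∈ ({z, i, j} : Finset (Fin n)), (R x (σ x) - R x x) = 0 := by
      rw [Finset.sum_subset (Finset.subset_univ _)]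
      · exact haux _
      · intro x _ hx
        simp only [Finset.mem_insert, Finset.mem_singleton, not_or] at hx
        have : σ x = x := by
          rw [hσ, Equiv.Perm.mul_apply, Equiv.swap_apply_of_ne_of_ne hx.1 hx.2.2,
            Equiv.swap_apply_of_ne_of_ne hx.1 hx.2.1]
        rw [this, sub_self]
    rw [Finset.sum_insert (by simp [hiz.symm, hjz.symm]),
      Finset.sum_insert (by simp [hij]), Finset.sum_singleton,
      hσz, hσi, hσj] at key
    linarith [key]
  -- the key structural identity
  have hkey : ∀ i j : Fin n, R i j = R i z + (R z j - R z z) := by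
    intro i j
    by_cases hiz : i = z
    · subst hiz; ring
    by_cases hjz : j = z
    · subst hjz
      have := hswap z i (Ne.symm hiz)
      linarith
    by_cases hij : i = j
    · subst hij
      have := hswap z i (Ne.symm hiz)
      linarith
    · have h1 := hcyc i j hiz hjz hij
      have h2 := hswap i j hij
      have h3 := hswap z i (Ne.symm hiz)
      linarith
  refine ⟨⟨fun i => R i z, fun j => R z j - R z z, hkey, ?_⟩, ?_, ?_⟩
  · have htr := h 1
    simp only [Equiv.Perm.one_apply] at htr
    have : ∑ i, (R i z + (R z i - R z z)) = 0 := by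
      rw [show (∑ i, (R i z + (R z i - R z z))) = ∑ i, R i i from
        Finset.sum_congr rfl fun i _ => (hkey i i).symm]
      exact htr
    rw [Finset.sum_add_distrib] at this
    linarith
  · -- rank ≤ 2 : factor R = C * D
    have hfact : R = (Matrix.of fun i (k : Fin 2) => if k = 0 then R i z else 1) *
        (Matrix.of fun (k : Fin 2) j => if k = 0 then 1 else R z j - R z z) := by
      ext i j
      rw [Matrix.mul_apply, Fin.sum_univ_two]
      simp [hkey i j]
    calc R.rank = _ := by rw [hfact]
      _ ≤ _ := Matrix.rank_mul_le_left _ _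
      _ ≤ Fintype.card (Fin 2) := Matrix.rank_le_card_width _
      _ = 2 := by simp
  · have htr := h 1
    simp only [Equiv.Perm.one_apply] at htr
    simpa [Matrix.trace, Matrix.diag] using htr
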